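/- Let X be a real Hilbert space, Z_N ⊂ X an N-dimensional subspace, U_M ⊂ X an M-dimensional subspace, and let Π denote orthogonal projection onto U_M. Suppose the constrained problem min{‖η‖ : (z,η) ∈ Z_N × U_M, ℓ_m(z+η) = y_m for m=1,…,M} has a solution (z*, η*) and the inf-sup constant β_{N,M} = inf_{z∈Z_N} sup_{q∈U_M} (z,q)/(‖z‖ ‖q‖) is strictly positive. Then η* is orthogonal to Z_N: (η*, p) = 0 for all p ∈ Z_N. -/

import Mathlib

open RealInnerProductSpace

/-- at a solution of the noise-free constrained PBDW problem with positive
inf-sup constant, the update `η*` is orthogonal to the background space `Z_N`. -/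
theorem stmt_10 {X : Type*} [NormedAddCommGroup X] [InnerProductSpace ℝ X] [CompleteSpace X]
    {N M : ℕ} (Z U : Submodule ℝ X)
    [FiniteDimensional ℝ Z] [FiniteDimensional ℝ U]
    (hZ : Module.finrank ℝ Z = N) (hUdim : Module.finrank ℝ U = M)
    (ℓ : Fin M → (X →L[ℝ] ℝ))
    (hU : U = Submodule.span ℝ
      (Set.range fun m => (InnerProductSpace.toDual ℝ X).symm (ℓ m)))
    (y : Fin M → ℝ)
    (β : ℝ) (hβ : 0 < β)
    (hinfsup : ∀ z ∈ Z, z ≠ 0 → ∃ q ∈ U, q ≠ 0 ∧ β * (‖z‖ * ‖q‖) ≤ ⟪z, q⟫)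
    (zs ηs : X) (hzs : zs ∈ Z) (hηs : ηs ∈ U)
    (hfeas : ∀ m, ℓ m (zs + ηs) = y m)
    (hmin : ∀ z ∈ Z, ∀ η ∈ U, (∀ m, ℓ m (z + η) = y m) → ‖ηs‖ ≤ ‖η‖) :
    ∀ p ∈ Z, ⟪ηs, p⟫ = 0 := by
  intro p hp
  set q : X := (U.orthogonalProjectionOnto p : X) with hq
  have hqU : q ∈ U := (U.orthogonalProjectionOnto p).2
  have hperp : p - q ∈ Uᗮ := Submodule.sub_starProjection_mem_orthogonal (K := U) p
  have hrep : ∀ m (x : X), ℓ m x = ⟪(InnerProductSpace.toDual ℝ X).symm (ℓ m), x⟫ :=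
    fun m x => (InnerProductSpace.toDual_symm_apply).symm
  have humU : ∀ m, (InnerProductSpace.toDual ℝ X).symm (ℓ m) ∈ U := fun m => by
    rw [hU]; exact Submodule.subset_span ⟨m, rfl⟩
  have key : ∀ t : ℝ, ‖ηs‖ ≤ ‖ηs + t • q‖ := by
    intro t
    apply hmin (zs - t • p) (Z.sub_mem hzs (Z.smul_mem t hp)) (ηs + t • q)
      (U.add_mem hηs (U.smul_mem t hqU))
    intro m
    have h0 : ⟪(InnerProductSpace.toDual ℝ X).symm (ℓ m), p - q⟫ = 0 :=
      (Submodule.mem_orthogonal _ _).mp hperp _ (humU m)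
    have hy := hfeas m
    rw [hrep] at hy ⊢
    have hx : zs - t • p + (ηs + t • q) = (zs + ηs) - t • (p - q) := by
      rw [smul_sub]; abel
    rw [hx, inner_sub_right, inner_smul_right, h0]
    simpa using hy
  have hinner : ⟪ηs, q⟫ = 0 := by
    have hsq : ∀ t : ℝ, 0 ≤ 2 * t * ⟪ηs, q⟫ + t ^ 2 * ‖q‖ ^ 2 := by
      intro t
      have h1 : ‖ηs + t • q‖ ^ 2 = ‖ηs‖ ^ 2 + 2 * (t * ⟪ηs, q⟫) + (t ^ 2 * ‖q‖ ^ 2) := by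
        rw [norm_add_sq_real, inner_smul_right, norm_smul]
        rw [mul_pow, Real.norm_eq_abs, sq_abs]
      nlinarith [key t, norm_nonneg ηs, norm_nonneg (ηs + t • q)]
    rcases eq_or_lt_of_le (sq_nonneg ‖q‖) with hs0 | hs'
    · linarith [hsq 1, hsq (-1), hs0.symm]
    · have h := hsq (-⟪ηs, q⟫ / ‖q‖ ^ 2)
      have hne : ‖q‖ ^ 2 ≠ 0 := ne_of_gt hs'
      have hE : 2 * (-⟪ηs, q⟫ / ‖q‖ ^ 2) * ⟪ηs, q⟫ + (-⟪ηs, q⟫ / ‖q‖ ^ 2) ^ 2 * ‖q‖ ^ 2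
          = -(⟪ηs, q⟫ ^ 2 / ‖q‖ ^ 2) := by
        field_simp
        ring
      rw [hE] at h
      have hd : ⟪ηs, q⟫ ^ 2 / ‖q‖ ^ 2 ≤ 0 := by linarith
      have hc2 : ⟪ηs, q⟫ ^ 2 ≤ 0 := by
        by_contra hcc
        push_neg at hcc
        exact absurd (div_pos hcc hs') (by linarith)
      nlinarith [sq_nonneg ⟪ηs, q⟫]
  have h3 : ⟪ηs, p - q⟫ = 0 := (Submodule.mem_orthogonal _ _).mp hperp _ hηs
  rw [inner_sub_right] at h3
  linarith
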